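/- Let f be a nonzero polynomial in n variables vanishing at the origin with n ≥ 2, and suppose every point (i₁,…,i_{n−2},i) ∈ supp f' of the polynomial f' = f(x₁,…,x_{n−1},x_{n−1}) arises from a point of supp f by summing the last two coordinates. Then for every point (i₁,…,i_{n−2},i) ∈ Δ₀(f') there exist a,b ∈ ℝ_{≥0} with a+b = i and (i₁,…,i_{n−2},a,b) ∈ Δ₀(f). -/
import Mathlib


open MvPolynomial Pointwise

noncomputable def suppSet {ι k : Type*} [CommSemiring k] (f : MvPolynomial ι k) :
    Set (ι → ℝ) :=
  (fun d : ι →₀ ℕ => fun i => (d i : ℝ)) '' (f.support : Set (ι →₀ ℕ))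

noncomputable def newton {ι k : Type*} [CommSemiring k] (f : MvPolynomial ι k) :
    Set (ι → ℝ) :=
  convexHull ℝ (suppSet f) + {x : ι → ℝ | ∀ i, 0 ≤ x i}

noncomputable def sigmaP {ι k : Type*} [CommSemiring k] (f : MvPolynomial ι k) : ENNReal :=
  sSup {s : ENNReal | ∃ σ : ℝ, 0 < σ ∧ s = ENNReal.ofReal σ ∧ (fun _ : ι => 1 / σ) ∈ newton f}

noncomputable def NV {ι k : Type*} [Fintype ι] [CommSemiring k]
    (f : MvPolynomial ι k) (a : ι → ℝ) : ℝ :=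
  sInf ((fun x => ∑ i, a i * x i) '' newton f)

noncomputable def meetLocus {ι k : Type*} [Fintype ι] [CommSemiring k]
    (f : MvPolynomial ι k) (a : ι → ℝ) : Set (ι → ℝ) :=
  {x ∈ newton f | ∑ i, a i * x i = NV f a}

open Classical in
noncomputable def trunc {ι k : Type*} [CommSemiring k]
    (f : MvPolynomial ι k) (τ : Set (ι → ℝ)) : MvPolynomial ι k :=
  ∑ d ∈ f.support, if (fun i => (d i : ℝ)) ∈ τ then monomial d (f.coeff d) else 0

def nondegWrt {ι k : Type*} [Fintype ι] [Field k]
    (f : MvPolynomial ι k) (τ : Set (ι → ℝ)) : Prop :=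
  ¬ ∃ x : ι → AlgebraicClosure k, (∀ i, x i ≠ 0) ∧
      ∀ i, eval x (pderiv i (map (algebraMap k (AlgebraicClosure k)) (trunc f τ))) = 0

def weakNondegWrt {ι k : Type*} [Fintype ι] [Field k]
    (f : MvPolynomial ι k) (τ : Set (ι → ℝ)) : Prop :=
  ¬ ∃ x : ι → AlgebraicClosure k, (∀ i, x i ≠ 0) ∧
      eval x (map (algebraMap k (AlgebraicClosure k)) (trunc f τ)) = 0 ∧
      ∀ i, eval x (pderiv i (map (algebraMap k (AlgebraicClosure k)) (trunc f τ))) = 0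

def isNondeg {ι k : Type*} [Fintype ι] [Field k] (f : MvPolynomial ι k) : Prop :=
  ∀ a : ι → ℝ, (∀ i, 0 ≤ a i) → nondegWrt f (meetLocus f a)

theorem stmt5 {k : Type*} [CommRing k] {n : ℕ}
    (f : MvPolynomial (Fin (n + 2)) k) (hf0 : f ≠ 0) (hf : constantCoeff f = 0)
    (f' : MvPolynomial (Fin (n + 1)) k)
    (hf' : f' = rename (fun i : Fin (n + 2) => (⟨min i.1 n, by omega⟩ : Fin (n + 1))) f)
    (comb : (Fin (n + 2) → ℝ) → (Fin (n + 1) → ℝ))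
    (hcomb : comb = fun q => fun j : Fin (n + 1) =>
      if h : (j : ℕ) < n then q ⟨j.1, by omega⟩ else q ⟨n, by omega⟩ + q ⟨n + 1, by omega⟩)
    (hsupp : suppSet f' ⊆ comb '' suppSet f) :
    ∀ p ∈ newton f', ∃ a b : ℝ, 0 ≤ a ∧ 0 ≤ b ∧ a + b = p (Fin.last n) ∧
      (fun i : Fin (n + 2) =>
        if h : (i : ℕ) < n then p ⟨i.1, by omega⟩ else if (i : ℕ) = n then a else b)
        ∈ newton f := by
  subst hcomb
  intro p hp
  rw [newton, Set.mem_add] at hp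
  obtain ⟨c, hc, r, hr, hcr⟩ := hp
  have hlin : IsLinearMap ℝ (fun q : Fin (n + 2) → ℝ => fun j : Fin (n + 1) =>
      if h : (j : ℕ) < n then q ⟨j.1, by omega⟩ else q ⟨n, by omega⟩ + q ⟨n + 1, by omega⟩) := by
    constructor
    · intro x y; funext j; by_cases h : (j : ℕ) < n <;> simp [h] <;> ring
    · intro a x; funext j; by_cases h : (j : ℕ) < n <;> simp [h] <;> ring
  have himg := hlin.image_convexHull (suppSet f)
  have hc' : c ∈ (fun q : Fin (n + 2) → ℝ => fun j : Fin (n + 1) =>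
      if h : (j : ℕ) < n then q ⟨j.1, by omega⟩ else q ⟨n, by omega⟩ + q ⟨n + 1, by omega⟩) ''
      convexHull ℝ (suppSet f) := by
    rw [himg]
    exact convexHull_mono hsupp hc
  obtain ⟨q, hq, hqc⟩ := hc'
  have hqnn : ∀ i, 0 ≤ q i := by
    have hsub : convexHull ℝ (suppSet f) ⊆ {x : Fin (n + 2) → ℝ | ∀ i, 0 ≤ x i} := by
      apply convexHull_min
      · rintro x ⟨d, _, rfl⟩ i; positivity
      · intro x hx y hy a b ha hb _ i
        have := add_nonneg (mul_nonneg ha (hx i)) (mul_nonneg hb (hy i))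
        simpa using this
    exact hsub hq
  refine ⟨q ⟨n, by omega⟩, q ⟨n + 1, by omega⟩ + r (Fin.last n),
    hqnn _, add_nonneg (hqnn _) (hr _), ?_, ?_⟩
  · have := congrFun hcr (Fin.last n)
    simp only [Pi.add_apply] at this
    rw [← this, ← hqc]
    have hn : ¬ ((Fin.last n : Fin (n + 1)) : ℕ) < n := by simp
    simp only [hn, dif_neg, not_false_iff]
    ring
  · rw [newton, Set.mem_add]
    refine ⟨q, hq, fun i : Fin (n + 2) =>
      if h : (i : ℕ) < n then r ⟨i.1, by omega⟩ else if (i : ℕ) = n then 0 else r (Fin.last n),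
      ?_, ?_⟩
    · intro i
      dsimp only
      split
      · exact hr _
      · split
        · exact le_refl 0
        · exact hr _
    · funext i
      simp only [Pi.add_apply]
      by_cases h : (i : ℕ) < n
      · have hp1 := congrFun hcr ⟨i.1, by omega⟩
        simp only [Pi.add_apply] at hp1
        rw [dif_pos h, dif_pos h, ← hp1, ← hqc]
        simp only [dif_pos (show ((⟨i.1, by omega⟩ : Fin (n + 1)) : ℕ) < n from h)]
      · by_cases h2 : (i : ℕ) = n
        · have hi : i = ⟨n, by omega⟩ := Fin.ext h2
          rw [dif_neg h, dif_neg h, if_pos h2, hi]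
          simp
        · have hi : i = ⟨n + 1, by omega⟩ := Fin.ext (by simp only [Fin.val_mk]; omega)
          rw [dif_neg h, dif_neg h, if_neg h2, if_neg h2, hi]
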